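/- For integers n and t with 2 ≤ t ≤ ⌊(n−1)/2⌋, let x̄ be the unique root in (0,1] of P(x) = −x·g(x) + 2∫₀ˣ g(z)dz, and let ε̄ = x̄/g(x̄). Then the potential threshold ε* of the scalar admissible system with f(x;ε) = εx and g(x) = Σ_{e=t}^{n−1} C(n−1,e) x^e (1−x)^{n−1−e} satisfies ε* = ε̄. -/

import Mathlib

open MeasureTheory Set Filter Topology

noncomputable section

/-- A scalar admissible system `(f, g)` parameterized by `ε ∈ [0,1]`:
`f : [0,1]×[0,1] → [0,1]` is strictly increasing in both arguments for `x, ε ∈ (0,1]`,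
`g : [0,1] → [0,1]` has `g'(x) > 0` for `x ∈ (0,1)`, `f(0;ε) = f(x;0) = g(0) = 0`,
and `f, g` have continuous second derivatives on `[0,1]` w.r.t. all arguments. -/
structure ScalarAdmissible (f : ℝ → ℝ → ℝ) (g : ℝ → ℝ) : Prop where
  f_mem : ∀ x ∈ Icc (0:ℝ) 1, ∀ ε ∈ Icc (0:ℝ) 1, f x ε ∈ Icc (0:ℝ) 1
  g_mem : ∀ x ∈ Icc (0:ℝ) 1, g x ∈ Icc (0:ℝ) 1
  f_mono_x : ∀ ε ∈ Ioc (0:ℝ) 1, StrictMonoOn (fun x => f x ε) (Ioc (0:ℝ) 1)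
  f_mono_eps : ∀ x ∈ Ioc (0:ℝ) 1, StrictMonoOn (fun ε => f x ε) (Ioc (0:ℝ) 1)
  g_deriv_pos : ∀ x ∈ Ioo (0:ℝ) 1, 0 < deriv g x
  f_zero_left : ∀ ε ∈ Icc (0:ℝ) 1, f 0 ε = 0
  f_zero_right : ∀ x ∈ Icc (0:ℝ) 1, f x 0 = 0
  g_zero : g 0 = 0
  f_smooth : ContDiffOn ℝ 2 (fun p : ℝ × ℝ => f p.1 p.2) (Icc (0:ℝ) 1 ×ˢ Icc (0:ℝ) 1)
  g_smooth : ContDiffOn ℝ 2 g (Icc (0:ℝ) 1)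

/-- The single-system potential `U(x;ε) = ∫₀ˣ (z − f(g(z);ε)) g'(z) dz`. -/
def singlePotential (f : ℝ → ℝ → ℝ) (g : ℝ → ℝ) (x ε : ℝ) : ℝ :=
  ∫ z in (0:ℝ)..x, (z - f (g z) ε) * deriv g z

/-- `u(ε) = sup { x̃ ∈ [0,1] : f(g(x);ε) < x for all x ∈ (0,x̃) }`,
the minimum unstable fixed point. -/
def uFix (f : ℝ → ℝ → ℝ) (g : ℝ → ℝ) (ε : ℝ) : ℝ :=
  sSup {xt : ℝ | xt ∈ Icc (0:ℝ) 1 ∧ ∀ x : ℝ, 0 < x → x < xt → f (g x) ε < x}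

/-- The energy gap `ΔE(ε) = min_{x ∈ [u(ε),1]} U(x;ε)`. -/
def energyGap (f : ℝ → ℝ → ℝ) (g : ℝ → ℝ) (ε : ℝ) : ℝ :=
  sInf ((fun x => singlePotential f g x ε) '' Icc (uFix f g ε) 1)

/-- The potential threshold
`ε* = sup { ε ∈ [0,1] : u(ε) > 0 and min_{x ∈ [u(ε),1]} U(x;ε) ≥ 0 }`. -/
def potentialThreshold (f : ℝ → ℝ → ℝ) (g : ℝ → ℝ) : ℝ :=
  sSup {ε : ℝ | ε ∈ Icc (0:ℝ) 1 ∧ 0 < uFix f g ε ∧ 0 ≤ energyGap f g ε}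

/-- `g(x) = Σ_{e=t}^{n−1} C(n−1,e) xᵉ (1−x)^{n−1−e}`, the check-node update of the GLDPC
density evolution (degree-2 bits, length-`n` BCH constraints correcting `t` erasures). -/
def gldpcG (n t : ℕ) (x : ℝ) : ℝ :=
  ∑ e ∈ Finset.Icc t (n - 1), ((n - 1).choose e : ℝ) * x ^ e * (1 - x) ^ (n - 1 - e)

/-- `P(x) = −x g(x) + 2 ∫₀ˣ g(z) dz`. -/
def gldpcP (n t : ℕ) (x : ℝ) : ℝ :=
  -x * gldpcG n t x + 2 * ∫ z in (0:ℝ)..x, gldpcG n t z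

namespace GLX
open Finset


def T (m k : ℕ) (x : ℝ) : ℝ := ∑ e ∈ Finset.Icc k m, ((m.choose e : ℝ)) * x ^ e * (1 - x) ^ (m - e)

def TD (m k : ℕ) (x : ℝ) : ℝ := ((m * (m-1).choose (k-1) : ℕ) : ℝ) * x ^ (k-1) * (1 - x) ^ (m - k)

lemma tele (f : ℕ → ℝ) : ∀ m k : ℕ, k ≤ m + 1 →
    ∑ e ∈ Finset.Icc k m, (f e - f (e+1)) = f k - f (m+1) := by
  intro m
  induction m with
  | zero =>
    intro k hk
    interval_cases k
    · simp
    · simp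
  | succ m ih =>
    intro k hk
    rcases le_or_gt k (m+1) with h | h
    · rw [Finset.sum_Icc_succ_top h, ih k h]; ring
    · have : k = m + 2 := by omega
      subst this
      rw [Finset.Icc_eq_empty (by omega)]
      simp

lemma nat_id1 {m e : ℕ} (hm : 1 ≤ m) (he : 1 ≤ e) :
    m * (m-1).choose (e-1) = m.choose e * e := by
  have h := Nat.add_one_mul_choose_eq (m-1) (e-1)
  rw [Nat.sub_add_cancel hm, Nat.sub_add_cancel he] at h
  exact h

lemma nat_id2 {m e : ℕ} (hm : 1 ≤ m) :
    m * (m-1).choose e = m.choose e * (m - e) := by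
  have h := Nat.add_one_mul_choose_eq (m-1) e
  rw [Nat.sub_add_cancel hm] at h
  rw [h, Nat.choose_succ_right_eq]

lemma T_hasDerivAt (m k : ℕ) (hk : 1 ≤ k) (x : ℝ) :
    HasDerivAt (T m k) (TD m k x) x := by
  rcases lt_or_ge m k with hm | hmk
  · have h1 : T m k = fun _ => 0 := by
      funext y; unfold T; rw [Finset.Icc_eq_empty (by omega)]; simp
    have h2 : TD m k x = 0 := by
      unfold TD
      rcases Nat.eq_zero_or_pos m with h | h
      · subst h; simp
      · rw [Nat.choose_eq_zero_of_lt (by omega)]; simp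
    rw [h1, h2]; exact hasDerivAt_const x 0
  have hm : 0 < m := lt_of_lt_of_le (by omega) hmk
  -- main case
  set F : ℕ → ℝ := fun j => ((m * (m-1).choose (j-1) : ℕ) : ℝ) * x ^ (j-1) * (1 - x) ^ (m - j) with hF
  have key : ∀ e ∈ Finset.Icc k m,
      HasDerivAt (fun y : ℝ => ((m.choose e : ℝ)) * y ^ e * (1 - y) ^ (m - e)) (F e - F (e+1)) x := by
    intro e he
    rw [Finset.mem_Icc] at he
    have he1 : 1 ≤ e := le_trans hk he.1
    have hpow : HasDerivAt (fun y : ℝ => y ^ e) ((e : ℝ) * x ^ (e-1)) x := hasDerivAt_pow e x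
    have hsub : HasDerivAt (fun y : ℝ => 1 - y) (-1 : ℝ) x := by
      simpa using (hasDerivAt_id x).const_sub 1
    have hpow2 : HasDerivAt (fun y : ℝ => (1 - y) ^ (m - e))
        ((((m - e : ℕ) : ℝ)) * (1 - x) ^ (m - e - 1) * (-1)) x :=
      (hasDerivAt_pow (m - e) (1 - x)).comp x hsub
    have hmain := (hpow.fun_mul hpow2).const_mul ((m.choose e : ℝ))
    have heq : ((m.choose e : ℝ)) * ((e : ℝ) * x ^ (e-1) * ((1-x)^(m-e)) +
        x ^ e * (((m - e : ℕ) : ℝ) * (1 - x) ^ (m - e - 1) * (-1))) = F e - F (e+1) := by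
      have c1 : ((m * (m-1).choose (e-1) : ℕ) : ℝ) = (m.choose e : ℝ) * (e : ℝ) := by
        exact_mod_cast congrArg (Nat.cast (R := ℝ)) (nat_id1 hm he1)
      have c2 : ((m * (m-1).choose e : ℕ) : ℝ) = (m.choose e : ℝ) * ((m - e : ℕ) : ℝ) := by
        exact_mod_cast congrArg (Nat.cast (R := ℝ)) (nat_id2 hm)
      rw [hF]
      simp only [Nat.add_sub_cancel]
      rw [c1, c2]
      have : m - (e+1) = m - e - 1 := by omega
      rw [this]
      ring
    rw [← heq]
    convert hmain using 1
    all_goals first | rfl | (ext y; ring)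
  have hsum := HasDerivAt.fun_sum key
  have : T m k = fun y => ∑ e ∈ Finset.Icc k m, ((m.choose e : ℝ)) * y ^ e * (1 - y) ^ (m - e) := rfl
  rw [this] at *
  have htel : ∑ e ∈ Finset.Icc k m, (F e - F (e+1)) = F k - F (m+1) := tele F m k (by omega)
  have hFm1 : F (m+1) = 0 := by
    have hc : (m-1).choose (m+1-1) = 0 := Nat.choose_eq_zero_of_lt (by omega)
    rw [hF]; simp only [hc]; simp
  have : TD m k x = F k := by rw [hF]; rfl
  rw [this]
  simpa [htel, hFm1] using hsum



lemma T_continuous (m k : ℕ) : Continuous (T m k) := by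
  unfold T
  exact continuous_finset_sum _ fun e _ =>
    ((continuous_const.mul (continuous_pow e)).mul
      (((continuous_const.sub continuous_id)).pow (m - e)))

lemma TD_continuous (m k : ℕ) : Continuous (TD m k) := by
  unfold TD
  exact (continuous_const.mul (continuous_pow (k-1))).mul
    (((continuous_const.sub continuous_id)).pow (m - k))

lemma T_deriv (m k : ℕ) (hk : 1 ≤ k) : deriv (T m k) = TD m k := by
  funext x; exact (T_hasDerivAt m k hk x).deriv

lemma T_zero (m k : ℕ) (hk : 1 ≤ k) : T m k 0 = 0 := by
  unfold T
  refine Finset.sum_eq_zero fun e he => ?_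
  rw [Finset.mem_Icc] at he
  rw [zero_pow (by omega)]
  ring

lemma T_one (m k : ℕ) (hk : k ≤ m) : T m k 1 = 1 := by
  unfold T
  rw [Finset.sum_eq_single m]
  · simp
  · intro e he hne
    rw [Finset.mem_Icc] at he
    rw [show (1:ℝ) - 1 = 0 by ring, zero_pow (by omega)]
    ring
  · intro h
    exact absurd (Finset.mem_Icc.2 ⟨hk, le_refl m⟩) h

lemma TD_pos (m k : ℕ) (hk : 1 ≤ k) (hkm : k ≤ m) {x : ℝ} (hx : x ∈ Ioo (0:ℝ) 1) :
    0 < TD m k x := by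
  unfold TD
  have h1 : 0 < m * (m-1).choose (k-1) :=
    Nat.mul_pos (by omega) (Nat.choose_pos (by omega))
  have h2 : (0:ℝ) < x := hx.1
  have h3 : (0:ℝ) < 1 - x := by linarith [hx.2]
  exact mul_pos (mul_pos (by exact_mod_cast h1) (pow_pos h2 _)) (pow_pos h3 _)

lemma TD_nonneg (m k : ℕ) {x : ℝ} (hx : x ∈ Icc (0:ℝ) 1) : 0 ≤ TD m k x := by
  unfold TD
  have h1 : (0:ℝ) ≤ x := hx.1
  have h2 : (0:ℝ) ≤ 1 - x := by linarith [hx.2]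
  exact mul_nonneg (mul_nonneg (Nat.cast_nonneg _) (pow_nonneg h1 _)) (pow_nonneg h2 _)

lemma T_strictMono (m k : ℕ) (hk : 1 ≤ k) (hkm : k ≤ m) :
    StrictMonoOn (T m k) (Icc (0:ℝ) 1) := by
  refine strictMonoOn_of_deriv_pos (convex_Icc 0 1) (T_continuous m k).continuousOn ?_
  intro x hx
  rw [interior_Icc] at hx
  rw [T_deriv m k hk]
  exact TD_pos m k hk hkm hx

lemma T_pos (m k : ℕ) (hk : 1 ≤ k) (hkm : k ≤ m) {x : ℝ} (hx : x ∈ Ioc (0:ℝ) 1) :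
    0 < T m k x := by
  have := T_strictMono m k hk hkm (left_mem_Icc.2 zero_le_one) ⟨le_of_lt hx.1, hx.2⟩ hx.1
  rwa [T_zero m k hk] at this

lemma T_le_one (m k : ℕ) (hk : 1 ≤ k) (hkm : k ≤ m) {x : ℝ} (hx : x ∈ Icc (0:ℝ) 1) :
    T m k x ≤ 1 := by
  rcases eq_or_lt_of_le hx.2 with h | h
  · rw [h, T_one m k hkm]
  · have := (T_strictMono m k hk hkm) hx (right_mem_Icc.2 zero_le_one) h
    rw [T_one m k hkm] at this
    exact le_of_lt this

lemma T_quad (m k : ℕ) (hk : 2 ≤ k) {x : ℝ} (hx : x ∈ Icc (0:ℝ) 1) :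
    T m k x ≤ 2^m * x^2 := by
  unfold T
  have h1 : ∀ e ∈ Finset.Icc k m, ((m.choose e : ℝ)) * x ^ e * (1 - x) ^ (m - e)
      ≤ ((m.choose e : ℝ)) * x ^ 2 := by
    intro e he
    rw [Finset.mem_Icc] at he
    have hx0 := hx.1
    have hx1 := hx.2
    have h2 : x ^ e ≤ x ^ 2 := pow_le_pow_of_le_one hx0 hx1 (by omega)
    have h3 : (1 - x) ^ (m - e) ≤ 1 := by
      apply pow_le_one₀ (by linarith) (by linarith)
    calc ((m.choose e : ℝ)) * x ^ e * (1 - x) ^ (m - e)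
        ≤ ((m.choose e : ℝ)) * x ^ e * 1 := by
          apply mul_le_mul_of_nonneg_left h3
          positivity
      _ = ((m.choose e : ℝ)) * x ^ e := by ring
      _ ≤ ((m.choose e : ℝ)) * x ^ 2 := by
          apply mul_le_mul_of_nonneg_left h2
          positivity
  calc ∑ e ∈ Finset.Icc k m, ((m.choose e : ℝ)) * x ^ e * (1 - x) ^ (m - e)
      ≤ ∑ e ∈ Finset.Icc k m, ((m.choose e : ℝ)) * x ^ 2 := Finset.sum_le_sum h1
    _ = (∑ e ∈ Finset.Icc k m, ((m.choose e : ℝ))) * x ^ 2 := by rw [← Finset.sum_mul]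
    _ ≤ 2^m * x^2 := by
        apply mul_le_mul_of_nonneg_right _ (by positivity)
        have : ∑ e ∈ Finset.Icc k m, ((m.choose e : ℝ)) ≤ ∑ e ∈ Finset.range (m+1), ((m.choose e : ℝ)) := by
          apply Finset.sum_le_sum_of_subset_of_nonneg
          · intro e he; rw [Finset.mem_Icc] at he; rw [Finset.mem_range]; omega
          · intro e _ _; positivity
        rw [show ∑ e ∈ Finset.range (m+1), ((m.choose e : ℝ)) = ((∑ e ∈ Finset.range (m+1), m.choose e : ℕ) : ℝ) by push_cast; rfl,
          Nat.sum_range_choose] at this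
        exact_mod_cast this

-- antiderivative of T m t
def A (m t : ℕ) (x : ℝ) : ℝ := ((m:ℝ)+1)⁻¹ * ∑ k ∈ Finset.Icc (t+1) (m+1), T (m+1) k x

lemma A_hasDerivAt (m t : ℕ) (x : ℝ) : HasDerivAt (A m t) (T m t x) x := by
  have h1 : HasDerivAt (fun y => ∑ k ∈ Finset.Icc (t+1) (m+1), T (m+1) k y)
      (∑ k ∈ Finset.Icc (t+1) (m+1), TD (m+1) k x) x := by
    apply HasDerivAt.fun_sum
    intro k hk
    rw [Finset.mem_Icc] at hk
    exact T_hasDerivAt (m+1) k (by omega) x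
  have h2 := h1.const_mul (((m:ℝ)+1)⁻¹)
  have h3 : ((m:ℝ)+1)⁻¹ * ∑ k ∈ Finset.Icc (t+1) (m+1), TD (m+1) k x = T m t x := by
    unfold TD T
    have hre : ∑ k ∈ Finset.Icc (t+1) (m+1), (((m+1) * (m+1-1).choose (k-1) : ℕ) : ℝ) * x ^ (k-1) * (1 - x) ^ (m+1-k)
        = ∑ e ∈ Finset.Icc t m, (((m+1) * m.choose e : ℕ) : ℝ) * x ^ e * (1 - x) ^ (m-e) := by
      rw [show Finset.Icc (t+1) (m+1) = Finset.map ⟨fun e => e + 1, add_left_injective 1⟩ (Finset.Icc t m) by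
        ext j
        simp only [Finset.mem_map, Finset.mem_Icc, Function.Embedding.coeFn_mk]
        constructor
        · intro h; exact ⟨j - 1, ⟨by omega, by omega⟩, by omega⟩
        · rintro ⟨a, ha, rfl⟩; omega]
      rw [Finset.sum_map]
      apply Finset.sum_congr rfl
      intro e he
      simp only [Function.Embedding.coeFn_mk, Nat.add_sub_cancel, Nat.succ_sub_succ, Nat.sub_zero]
    rw [hre, Finset.mul_sum]
    apply Finset.sum_congr rfl
    intro e he
    have hm1 : ((m:ℝ)+1) ≠ 0 := by positivity
    push_cast
    field_simp
  rw [← h3]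
  exact h2



lemma A_continuous (m t : ℕ) : Continuous (A m t) :=
  continuous_const.mul (continuous_finset_sum _ fun k _ => T_continuous (m+1) k)

lemma A_zero (m t : ℕ) : A m t 0 = 0 := by
  unfold A
  rw [Finset.sum_eq_zero fun k hk => T_zero (m+1) k (by rw [Finset.mem_Icc] at hk; omega)]
  simp

lemma A_one (m t : ℕ) (ht : t ≤ m) : A m t 1 = ((m:ℝ) + 1 - t) / ((m:ℝ)+1) := by
  unfold A
  rw [Finset.sum_congr rfl fun k hk => T_one (m+1) k (by rw [Finset.mem_Icc] at hk; omega)]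
  rw [Finset.sum_const, Nat.card_Icc]
  have : (m + 1 + 1 - (t+1) : ℕ) = m + 1 - t := by omega
  rw [this]
  have h2 : ((m + 1 - t : ℕ) : ℝ) = (m:ℝ) + 1 - t := by
    push_cast [Nat.cast_sub (by omega : t ≤ m + 1)]; ring
  rw [nsmul_eq_mul, h2]
  ring

lemma integral_T (m t : ℕ) (ht : 1 ≤ t) (x : ℝ) :
    ∫ z in (0:ℝ)..x, T m t z = A m t x := by
  have := intervalIntegral.integral_eq_sub_of_hasDerivAt
    (f := A m t) (f' := T m t) (a := 0) (b := x)
    (fun z _ => A_hasDerivAt m t z)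
    ((T_continuous m t).intervalIntegrable 0 x)
  rw [this, A_zero]
  ring

-- the potential-type function: V x ε = x T x - A x - ε (T x)^2 / 2

def V (m t : ℕ) (x ε : ℝ) : ℝ := x * T m t x - A m t x - ε * (T m t x)^2 / 2

lemma V_hasDerivAt (m t : ℕ) (ht : 1 ≤ t) (ε x : ℝ) :
    HasDerivAt (fun y => V m t y ε) ((x - ε * T m t x) * TD m t x) x := by
  have h1 : HasDerivAt (fun y : ℝ => y * T m t y) (T m t x + x * TD m t x) x := by
    simpa using (hasDerivAt_id x).fun_mul (T_hasDerivAt m t ht x)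
  have h2 := A_hasDerivAt m t x
  have h3 := (((T_hasDerivAt m t ht x).pow 2).const_mul ε).div_const 2
  have h4 := (h1.sub h2).sub h3
  convert h4 using 1
  all_goals first | rfl | (push_cast; ring)

lemma V_continuous (m t : ℕ) (ε : ℝ) : Continuous (fun x => V m t x ε) := by
  unfold V
  exact ((continuous_id.mul (T_continuous m t)).sub (A_continuous m t)).sub
    ((continuous_const.mul ((T_continuous m t).pow 2)).div_const 2)

lemma V_eq_integral (m t : ℕ) (ht : 1 ≤ t) (x ε : ℝ) :
    ∫ z in (0:ℝ)..x, (z - ε * T m t z) * TD m t z = V m t x ε := by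
  have := intervalIntegral.integral_eq_sub_of_hasDerivAt
    (f := fun y => V m t y ε) (f' := fun z => (z - ε * T m t z) * TD m t z) (a := 0) (b := x)
    (fun z _ => V_hasDerivAt m t ht ε z)
    (Continuous.intervalIntegrable (((continuous_id.sub (continuous_const.mul (T_continuous m t)))).mul (TD_continuous m t)) 0 x)
  rw [this]
  simp only [V]
  rw [T_zero m t ht, A_zero]
  ring



/-- `ψ x = x·T'(x) − T(x)` -/
def psi (m t : ℕ) (x : ℝ) : ℝ := x * TD m t x - T m t x

/-- `H x = Σ_e C(m,e) (x/(1-x))^(e-t)` -/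
def HH (m t : ℕ) (x : ℝ) : ℝ := ∑ e ∈ Finset.Icc t m, ((m.choose e : ℝ)) * (x / (1-x)) ^ (e - t)

lemma psi_factor (m t : ℕ) (ht : 1 ≤ t) {x : ℝ} (hx : x ∈ Ioo (0:ℝ) 1) :
    psi m t x = x^t * (1-x)^(m-t) * (((m * (m-1).choose (t-1) : ℕ) : ℝ) - HH m t x) := by
  have hx1 : (1:ℝ) - x ≠ 0 := by have := hx.2; intro h; linarith [h]
  unfold psi TD HH T
  rw [mul_sub, Finset.mul_sum]
  have h1 : x * (((m * (m-1).choose (t-1) : ℕ) : ℝ) * x ^ (t-1) * (1 - x) ^ (m - t))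
      = x^t * (1-x)^(m-t) * ((m * (m-1).choose (t-1) : ℕ) : ℝ) := by
    rw [show x^t = x * x^(t-1) by rw [← pow_succ']; congr 1; omega]
    ring
  rw [h1]
  congr 1
  apply Finset.sum_congr rfl
  intro e he
  rw [Finset.mem_Icc] at he
  have hxe : x ^ e = x^t * (x)^(e-t) := by
    rw [← pow_add]; congr 1; omega
  have h0 : (x / (1-x))^(e-t) = x^(e-t) / (1-x)^(e-t) := div_pow x (1-x) (e-t)
  rw [h0, hxe]
  have h2 : (1-x)^(e-t) * (1-x)^(m-e) = (1-x)^(m-t) := by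
    rw [← pow_add]; congr 1; omega
  field_simp
  rw [← h2]
  ring

lemma yfun_mono : StrictMonoOn (fun x : ℝ => x / (1-x)) (Ico (0:ℝ) 1) := by
  intro a ha b hb hab
  have h1 : (0:ℝ) < 1 - a := by linarith [ha.2]
  have h2 : (0:ℝ) < 1 - b := by linarith [hb.2]
  rw [div_lt_div_iff₀ h1 h2]
  nlinarith [ha.1]

lemma HH_mono (m t : ℕ) (ht : 1 ≤ t) (htm : t + 1 ≤ m) :
    StrictMonoOn (HH m t) (Ico (0:ℝ) 1) := by
  intro a ha b hb hab
  unfold HH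
  apply Finset.sum_lt_sum
  · intro e he
    apply mul_le_mul_of_nonneg_left _ (Nat.cast_nonneg _)
    apply pow_le_pow_left₀
    · apply div_nonneg ha.1; linarith [ha.2]
    · exact le_of_lt (yfun_mono ha hb hab)
  · refine ⟨m, Finset.mem_Icc.2 ⟨by omega, le_refl m⟩, ?_⟩
    apply mul_lt_mul_of_pos_left _ (by exact_mod_cast Nat.choose_pos (le_refl m) : (0:ℝ) < (m.choose m : ℝ))
    apply pow_lt_pow_left₀ (yfun_mono ha hb hab)
    · apply div_nonneg ha.1; linarith [ha.2]
    · omega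

lemma HH_continuousOn (m t : ℕ) : ContinuousOn (HH m t) (Ico (0:ℝ) 1) := by
  unfold HH
  apply continuousOn_finset_sum
  intro e _
  apply ContinuousOn.mul continuousOn_const
  apply ContinuousOn.pow
  apply ContinuousOn.div continuousOn_id (continuousOn_const.sub continuousOn_id)
  intro x hx
  have h2 := hx.2
  intro h
  simp only [Pi.sub_apply, id] at h
  linarith

/-- Existence of the crossing point x* of ψ. -/
lemma psi_crossing (m t : ℕ) (ht : 2 ≤ t) (htm : 2*t ≤ m) :
    ∃ xs ∈ Ioo (0:ℝ) 1, (∀ x ∈ Ioo (0:ℝ) xs, 0 < psi m t x) ∧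
      (∀ x ∈ Ioo xs (1:ℝ), psi m t x < 0) := by
  set M : ℕ := m * (m-1).choose (t-1) with hM
  have hm4 : 4 ≤ m := by omega
  have hMt : M = t * m.choose t := by
    rw [hM]
    have h := Nat.add_one_mul_choose_eq (m-1) (t-1)
    rw [Nat.sub_add_cancel (by omega : 1 ≤ m), Nat.sub_add_cancel (by omega : 1 ≤ t)] at h
    rw [h]; ring
  have hchoosepos : 0 < m.choose t := Nat.choose_pos (by omega)
  have hM2 : 2 * m.choose t ≤ M := by rw [hMt]; exact Nat.mul_le_mul_right _ ht
  have hM2' : 2 ≤ M := by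
    rw [hMt]
    calc 2 = 2 * 1 := rfl
    _ ≤ t * m.choose t := Nat.mul_le_mul ht hchoosepos
  set Mr : ℝ := (M : ℝ) with hMr
  have hMr2 : (2:ℝ) ≤ Mr := by rw [hMr]; exact_mod_cast hM2'
  -- upper point b
  set b : ℝ := Mr / (Mr + 1) with hb
  have hMr1 : (0:ℝ) < Mr + 1 := by linarith
  have hb0 : 0 < b := by positivity
  have hb1 : b < 1 := by rw [hb, div_lt_one hMr1]; linarith
  have hyb : b / (1 - b) = Mr := by
    rw [hb]
    have h1 : 1 - Mr / (Mr + 1) = 1 / (Mr + 1) := by field_simp; ring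
    rw [h1]
    field_simp
  have hHb : Mr < HH m t b := by
    have hsingle : ((m.choose m : ℝ)) * (b / (1-b)) ^ (m - t) ≤ HH m t b := by
      unfold HH
      apply Finset.single_le_sum (f := fun e => ((m.choose e : ℝ)) * (b / (1-b)) ^ (e - t))
      · intro e _
        apply mul_nonneg (Nat.cast_nonneg _)
        apply pow_nonneg
        rw [hyb]; linarith
      · exact Finset.mem_Icc.2 ⟨by omega, le_refl m⟩
    rw [Nat.choose_self, hyb] at hsingle
    have h2 : Mr^2 ≤ Mr ^ (m - t) := by
      apply pow_le_pow_right₀ (by linarith) (by omega)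
    have h3 : Mr < Mr^2 := by nlinarith
    simp only [Nat.cast_one, one_mul] at hsingle
    linarith
  -- lower point a
  set y0 : ℝ := (2 * 2^m)⁻¹ with hy0
  have hy0pos : 0 < y0 := by positivity
  have hy0le : y0 ≤ 1 := by
    rw [hy0]
    rw [inv_le_one₀ (by positivity)]
    have : (1:ℝ) ≤ 2^m := one_le_pow₀ (by norm_num)
    linarith
  set a : ℝ := y0 / (1 + y0) with ha
  have ha0 : 0 < a := by positivity
  have ha1 : a < 1 := by rw [ha, div_lt_one (by positivity)]; linarith
  have hya : a / (1 - a) = y0 := by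
    rw [ha]
    have h1 : 1 - y0 / (1 + y0) = 1 / (1 + y0) := by field_simp; ring
    rw [h1]
    field_simp
  have hC1 : (1:ℝ) ≤ (m.choose t : ℝ) := by exact_mod_cast hchoosepos
  have hCM : 2 * (m.choose t : ℝ) ≤ Mr := by rw [hMr]; exact_mod_cast hM2
  have hHa : HH m t a < Mr := by
    have hsplit : Finset.Icc t m = insert t (Finset.Icc (t+1) m) := by
      ext j; simp only [Finset.mem_insert, Finset.mem_Icc]; omega
    unfold HH
    rw [hsplit, Finset.sum_insert (by simp)]
    rw [hya]
    simp only [Nat.sub_self, pow_zero, mul_one]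
    have hrest : ∑ e ∈ Finset.Icc (t+1) m, ((m.choose e : ℝ)) * y0 ^ (e - t) ≤ 2^m * y0 := by
      calc ∑ e ∈ Finset.Icc (t+1) m, ((m.choose e : ℝ)) * y0 ^ (e - t)
          ≤ ∑ e ∈ Finset.Icc (t+1) m, ((m.choose e : ℝ)) * y0 := by
            apply Finset.sum_le_sum
            intro e he
            rw [Finset.mem_Icc] at he
            apply mul_le_mul_of_nonneg_left _ (Nat.cast_nonneg _)
            calc y0 ^ (e - t) ≤ y0 ^ 1 := pow_le_pow_of_le_one (le_of_lt hy0pos) hy0le (by omega)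
            _ = y0 := pow_one y0
        _ = (∑ e ∈ Finset.Icc (t+1) m, ((m.choose e : ℝ))) * y0 := by rw [← Finset.sum_mul]
        _ ≤ 2^m * y0 := by
            apply mul_le_mul_of_nonneg_right _ (le_of_lt hy0pos)
            have h5 : ∑ e ∈ Finset.Icc (t+1) m, ((m.choose e : ℝ))
                ≤ ∑ e ∈ Finset.range (m+1), ((m.choose e : ℝ)) := by
              apply Finset.sum_le_sum_of_subset_of_nonneg
              · intro e he; rw [Finset.mem_Icc] at he; rw [Finset.mem_range]; omega
              · intro e _ _; positivity
            rw [show ∑ e ∈ Finset.range (m+1), ((m.choose e : ℝ))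
                = ((∑ e ∈ Finset.range (m+1), m.choose e : ℕ) : ℝ) by push_cast; rfl,
              Nat.sum_range_choose] at h5
            exact_mod_cast h5
    have h6 : (2:ℝ)^m * y0 = 1/2 := by
      rw [hy0]; field_simp
    rw [h6] at hrest
    linarith
  -- a ≤ b
  have hab : a ≤ b := by
    have h1 : a ≤ 1/2 := by
      rw [ha, div_le_iff₀ (by positivity)]; linarith
    have h2 : (1:ℝ)/2 ≤ b := by
      rw [hb, le_div_iff₀ hMr1]; linarith
    linarith
  -- IVT
  have hsub : Icc a b ⊆ Ico (0:ℝ) 1 := fun z hz => ⟨le_trans (le_of_lt ha0) hz.1, lt_of_le_of_lt hz.2 hb1⟩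
  have hivt := intermediate_value_Icc hab ((HH_continuousOn m t).mono hsub)
  have hMmem : Mr ∈ Icc (HH m t a) (HH m t b) := ⟨le_of_lt hHa, le_of_lt hHb⟩
  obtain ⟨xs, hxs, hHxs⟩ := hivt hMmem
  refine ⟨xs, ⟨lt_of_lt_of_le ha0 hxs.1, lt_of_le_of_lt hxs.2 hb1⟩, ?_, ?_⟩
  · intro x hx
    have hxI : x ∈ Ioo (0:ℝ) 1 := ⟨hx.1, lt_trans hx.2 (lt_of_le_of_lt hxs.2 hb1)⟩
    rw [psi_factor m t (by omega) hxI]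
    have hHlt : HH m t x < Mr := by
      rw [← hHxs]
      exact HH_mono m t (by omega) (by omega) ⟨le_of_lt hxI.1, hxI.2⟩
        ⟨le_trans (le_of_lt ha0) hxs.1, lt_of_le_of_lt hxs.2 hb1⟩ hx.2
    have h1 : (0:ℝ) < x ^ t := pow_pos hxI.1 t
    have h2 : (0:ℝ) < (1-x) ^ (m-t) := pow_pos (by linarith [hxI.2]) (m-t)
    have : (0:ℝ) < Mr - HH m t x := by linarith
    rw [hMr] at this
    exact mul_pos (mul_pos h1 h2) this
  · intro x hx
    have hxI : x ∈ Ioo (0:ℝ) 1 := ⟨lt_of_lt_of_le (lt_of_lt_of_le ha0 hxs.1) (le_of_lt hx.1), hx.2⟩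
    rw [psi_factor m t (by omega) hxI]
    have hHgt : Mr < HH m t x := by
      rw [← hHxs]
      exact HH_mono m t (by omega) (by omega)
        ⟨le_trans (le_of_lt ha0) hxs.1, lt_of_le_of_lt hxs.2 hb1⟩
        ⟨le_of_lt hxI.1, hxI.2⟩ hx.1
    have h1 : (0:ℝ) < x ^ t := pow_pos hxI.1 t
    have h2 : (0:ℝ) < (1-x) ^ (m-t) := pow_pos (by linarith [hxI.2]) (m-t)
    have h3 : Mr - HH m t x < 0 := by linarith
    rw [hMr] at h3
    exact mul_neg_of_pos_of_neg (mul_pos h1 h2) h3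





theorem main_aux (m t : ℕ) (ht1 : 2 ≤ t) (htm : 2*t ≤ m)
    (xbar : ℝ) (hxbar : xbar ∈ Ioc (0:ℝ) 1)
    (hroot : xbar * T m t xbar / 2 - A m t xbar = 0) :
    potentialThreshold (fun x ε => ε * x) (T m t) = xbar / T m t xbar := by
  have ht : 1 ≤ t := by omega
  have htm' : t ≤ m := by omega
  have hxbar0 : 0 < xbar := hxbar.1
  have hxbar1 : xbar ≤ 1 := hxbar.2
  obtain ⟨xs, hxsI, hpsi_pos, hpsi_neg⟩ := psi_crossing m t ht1 htm
  have hxs0 : 0 < xs := hxsI.1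
  have hxs1 : xs < 1 := hxsI.2
  -- the function φ
  set φ : ℝ → ℝ := fun x => x * T m t x / 2 - A m t x with hφ
  have hφd : ∀ x : ℝ, HasDerivAt φ (psi m t x / 2) x := by
    intro x
    have h1 := (((hasDerivAt_id x).fun_mul (T_hasDerivAt m t ht x)).div_const 2).sub (A_hasDerivAt m t x)
    convert h1 using 1
    all_goals first | rfl | (unfold psi
                             simp only [id_eq]
                             ring)
  have hφcont : Continuous φ := by
    apply Continuous.sub _ (A_continuous m t)
    exact (continuous_id.mul (T_continuous m t)).div_const 2
  have hφmono : StrictMonoOn φ (Icc 0 xs) := by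
    apply strictMonoOn_of_deriv_pos (convex_Icc 0 xs) hφcont.continuousOn
    intro x hx
    rw [interior_Icc] at hx
    rw [(hφd x).deriv]
    exact div_pos (hpsi_pos x hx) two_pos
  have hφanti : StrictAntiOn φ (Icc xs 1) := by
    apply strictAntiOn_of_deriv_neg (convex_Icc xs 1) hφcont.continuousOn
    intro x hx
    rw [interior_Icc] at hx
    rw [(hφd x).deriv]
    exact div_neg_of_neg_of_pos (hpsi_neg x hx) two_pos
  have hφ0 : φ 0 = 0 := by
    rw [hφ]; simp [T_zero m t ht, A_zero m t]
  have hφxbar : φ xbar = 0 := hroot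
  -- xs < xbar
  have hxsxbar : xs < xbar := by
    by_contra h
    push_neg at h
    have := hφmono (left_mem_Icc.2 (le_of_lt hxs0)) ⟨le_of_lt hxbar0, h⟩ hxbar0
    rw [hφ0, hφxbar] at this
    exact lt_irrefl 0 this
  have hTxbar : 0 < T m t xbar := T_pos m t ht htm' ⟨hxbar0, hxbar1⟩
  set εb : ℝ := xbar / T m t xbar with hεb
  have hεb0 : 0 < εb := div_pos hxbar0 hTxbar
  -- the ε function
  set efun : ℝ → ℝ := fun x => x / T m t x with hefun
  have hed : ∀ x ∈ Ioo (0:ℝ) 1, HasDerivAt efun (-(psi m t x) / (T m t x)^2) x := by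
    intro x hx
    have hT : T m t x ≠ 0 := ne_of_gt (T_pos m t ht htm' ⟨hx.1, le_of_lt hx.2⟩)
    have h1 := (hasDerivAt_id x).div (T_hasDerivAt m t ht x) hT
    convert h1 using 1
    all_goals first | rfl | (unfold psi
                             simp only [id_eq]
                             ring)
  have hecont : ∀ s : Set ℝ, s ⊆ Ioc (0:ℝ) 1 → ContinuousOn efun s := by
    intro s hs
    apply ContinuousOn.div continuousOn_id (T_continuous m t).continuousOn
    intro x hx
    exact ne_of_gt (T_pos m t ht htm' (hs hx))
  have hemono : MonotoneOn efun (Icc xs 1) := by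
    apply monotoneOn_of_deriv_nonneg (convex_Icc xs 1)
      (hecont _ (fun z hz => ⟨lt_of_lt_of_le hxs0 hz.1, hz.2⟩))
    · intro x hx
      rw [interior_Icc] at hx
      exact ((hed x ⟨lt_trans hxs0 hx.1, hx.2⟩).differentiableAt).differentiableWithinAt
    · intro x hx
      rw [interior_Icc] at hx
      rw [(hed x ⟨lt_trans hxs0 hx.1, hx.2⟩).deriv]
      apply div_nonneg _ (sq_nonneg _)
      linarith [hpsi_neg x hx]
  have heanti : StrictAntiOn efun (Ioc 0 xs) := by
    apply strictAntiOn_of_deriv_neg (convex_Ioc 0 xs)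
      (hecont _ (fun z hz => ⟨hz.1, le_trans hz.2 (le_of_lt hxs1)⟩))
    intro x hx
    rw [interior_Ioc] at hx
    rw [(hed x ⟨hx.1, lt_trans hx.2 hxs1⟩).deriv]
    apply div_neg_of_neg_of_pos _ (pow_pos (T_pos m t ht htm' ⟨hx.1, by linarith [hx.2]⟩) 2)
    linarith [hpsi_pos x hx]
  have hefun1 : efun 1 = 1 := by rw [hefun]; simp [T_one m t htm']
  have hεb1 : εb ≤ 1 := by
    have := hemono ⟨le_of_lt hxsxbar, hxbar1⟩ ⟨le_of_lt hxs1, le_refl 1⟩ hxbar1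
    rwa [hefun1] at this
  -- quadratic lower bound on efun
  have hquad : ∀ x ∈ Ioc (0:ℝ) 1, 1 / (2^m * x) ≤ efun x := by
    intro x hx
    have hT0 : 0 < T m t x := T_pos m t ht htm' hx
    have h1 : T m t x ≤ 2^m * x^2 := T_quad m t ht1 ⟨le_of_lt hx.1, hx.2⟩
    have h2 : x / (2^m * x^2) ≤ x / T m t x :=
      div_le_div_of_nonneg_left (le_of_lt hx.1) hT0 h1
    have hx0' : (0:ℝ) < x := hx.1
    have h3 : x / (2^m * x^2) = 1 / (2^m * x) := by
      rw [pow_two]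
      rw [div_eq_div_iff (by positivity) (by positivity)]
      ring
    rw [← h3]
    exact h2
  -- xs is not too small
  have hxs_lb : 1 / (2^m : ℝ) ≤ xs := by
    have h1 := hquad xs ⟨hxs0, le_of_lt hxs1⟩
    have h2 : efun xs ≤ εb := hemono ⟨le_refl xs, le_of_lt hxs1⟩ ⟨le_of_lt hxsxbar, hxbar1⟩ (le_of_lt hxsxbar)
    have h3 : 1 / (2^m * xs) ≤ 1 := le_trans h1 (le_trans h2 hεb1)
    rw [div_le_one (by positivity)] at h3
    rw [div_le_iff₀ (by positivity : (0:ℝ) < (2:ℝ)^m)]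
    linarith
  set x0 : ℝ := 1 / (2 * 2^m) with hx0
  have hx00 : 0 < x0 := by positivity
  have hx0xs : x0 < xs := by
    have h1 : x0 < 1 / (2^m : ℝ) := by
      rw [hx0]
      apply div_lt_div_of_pos_left one_pos (by positivity)
      nlinarith [one_le_pow₀ (by norm_num : (1:ℝ) ≤ 2) (n := m)]
    linarith
  have hx0e : 2 ≤ efun x0 := by
    have h1 := hquad x0 ⟨hx00, by
      rw [hx0, div_le_one (by positivity)]
      nlinarith [one_le_pow₀ (by norm_num : (1:ℝ) ≤ 2) (n := m)]⟩
    have h2 : (2:ℝ)^m * x0 = 1/2 := by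
      rw [hx0]
      field_simp
    rw [h2] at h1
    norm_num at h1
    linarith
  -- find the first fixed point u
  have hivt := intermediate_value_Icc' (le_of_lt hx0xs)
    (hecont _ (fun z hz => ⟨lt_of_lt_of_le hx00 hz.1, le_trans hz.2 (le_of_lt hxs1)⟩))
  have hexs : efun xs ≤ εb := hemono ⟨le_refl xs, le_of_lt hxs1⟩ ⟨le_of_lt hxsxbar, hxbar1⟩ (le_of_lt hxsxbar)
  obtain ⟨u, huI, hue⟩ := hivt ⟨hexs, by linarith⟩
  have hu0 : 0 < u := lt_of_lt_of_le hx00 huI.1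
  have huxs : u ≤ xs := huI.2
  have hu1 : u ≤ 1 := le_trans huxs (le_of_lt hxs1)
  have hTu : 0 < T m t u := T_pos m t ht htm' ⟨hu0, hu1⟩
  have hufix : εb * T m t u = u := by
    have : u / T m t u = εb := hue
    field_simp at this
    linarith [this]
  -- uFix bounds
  have huFix_le : ∀ ε : ℝ, εb ≤ ε → uFix (fun x ε => ε * x) (T m t) ε ≤ u := by
    intro ε hε
    apply Real.sSup_le _ (le_of_lt hu0)
    rintro xt ⟨hxt01, hcond⟩
    by_contra h
    push_neg at h
    have h2 := hcond u hu0 h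
    simp only at h2
    have h3 : εb * T m t u ≤ ε * T m t u := mul_le_mul_of_nonneg_right hε (le_of_lt hTu)
    rw [hufix] at h3
    linarith
  have huFix : uFix (fun x ε => ε * x) (T m t) εb = u := by
    apply le_antisymm (huFix_le εb (le_refl εb))
    apply le_csSup
    · exact ⟨1, fun y hy => hy.1.2⟩
    · refine ⟨⟨le_of_lt hu0, hu1⟩, ?_⟩
      intro x hx0' hxu
      simp only
      have hx_mem : x ∈ Ioc (0:ℝ) xs := ⟨hx0', le_trans (le_of_lt hxu) huxs⟩
      have hu_mem : u ∈ Ioc (0:ℝ) xs := ⟨hu0, huxs⟩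
      have h1 : efun u < efun x := heanti hx_mem hu_mem hxu
      rw [hue] at h1
      have hTx : 0 < T m t x := T_pos m t ht htm' ⟨hx0', le_trans hx_mem.2 (le_of_lt hxs1)⟩
      rw [lt_div_iff₀ hTx] at h1
      linarith
  -- V at xbar with εb
  have hVxbar : V m t xbar εb = 0 := by
    unfold V
    have h1 : εb * (T m t xbar)^2 = xbar * T m t xbar := by
      rw [hεb]
      field_simp
    rw [h1]
    unfold φ at hφxbar
    linarith
  -- efun at xbar
  have hexbar : efun xbar = εb := rfl
  -- V is antitone on [u, xbar]
  have hV_anti : AntitoneOn (fun x => V m t x εb) (Icc u xbar) := by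
    apply antitoneOn_of_deriv_nonpos (convex_Icc u xbar) (V_continuous m t εb).continuousOn
    · intro x hx
      exact (V_hasDerivAt m t ht εb x).differentiableAt.differentiableWithinAt
    · intro x hx
      rw [interior_Icc] at hx
      rw [(V_hasDerivAt m t ht εb x).deriv]
      have hx0' : 0 < x := lt_trans hu0 hx.1
      have hx1' : x ≤ 1 := le_trans (le_of_lt hx.2) hxbar1
      have hTx : 0 < T m t x := T_pos m t ht htm' ⟨hx0', hx1'⟩
      have hkey : x - εb * T m t x ≤ 0 := by
        have hex : efun x ≤ εb := by
          rcases le_or_gt x xs with hcase | hcase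
          · have := heanti.le_iff_ge (⟨hx0', hcase⟩ : x ∈ Ioc (0:ℝ) xs) (⟨hu0, huxs⟩ : u ∈ Ioc (0:ℝ) xs)
            rw [← hue]
            apply this.2
            exact le_of_lt hx.1
          · have := hemono (⟨le_of_lt hcase, hx1'⟩ : x ∈ Icc xs 1) (⟨le_of_lt hxsxbar, hxbar1⟩ : xbar ∈ Icc xs 1) (le_of_lt hx.2)
            rwa [hexbar] at this
        have : x / T m t x ≤ εb := hex
        rw [div_le_iff₀ hTx] at this
        linarith
      exact mul_nonpos_of_nonpos_of_nonneg hkey (TD_nonneg m t ⟨le_of_lt hx0', hx1'⟩)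
  -- V is monotone on [xbar, 1]
  have hV_mono : MonotoneOn (fun x => V m t x εb) (Icc xbar 1) := by
    apply monotoneOn_of_deriv_nonneg (convex_Icc xbar 1) (V_continuous m t εb).continuousOn
    · intro x hx
      exact (V_hasDerivAt m t ht εb x).differentiableAt.differentiableWithinAt
    · intro x hx
      rw [interior_Icc] at hx
      rw [(V_hasDerivAt m t ht εb x).deriv]
      have hx0' : 0 < x := lt_trans hxbar0 hx.1
      have hTx : 0 < T m t x := T_pos m t ht htm' ⟨hx0', le_of_lt hx.2⟩
      have hkey : 0 ≤ x - εb * T m t x := by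
        have hex : εb ≤ efun x := by
          rw [← hexbar]
          exact hemono ⟨le_of_lt hxsxbar, hxbar1⟩
            ⟨le_trans (le_of_lt hxsxbar) (le_of_lt hx.1), le_of_lt hx.2⟩ (le_of_lt hx.1)
        have : εb ≤ x / T m t x := hex
        rw [le_div_iff₀ hTx] at this
        linarith
      exact mul_nonneg hkey (TD_nonneg m t ⟨le_of_lt hx0', le_of_lt hx.2⟩)
  -- V nonneg on [u, 1]
  have hV_nonneg : ∀ x ∈ Icc u (1:ℝ), 0 ≤ V m t x εb := by
    intro x hx
    rcases le_total x xbar with hcase | hcase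
    · have := hV_anti (⟨hx.1, hcase⟩ : x ∈ Icc u xbar)
        (⟨le_trans huxs (le_of_lt hxsxbar), le_refl xbar⟩ : xbar ∈ Icc u xbar) hcase
      simpa [hVxbar] using this
    · have := hV_mono (⟨le_refl xbar, hxbar1⟩ : xbar ∈ Icc xbar 1)
        (⟨hcase, hx.2⟩ : x ∈ Icc xbar 1) hcase
      simpa [hVxbar] using this
  -- singlePotential equals V
  have hSP : ∀ x ε : ℝ, singlePotential (fun x ε => ε * x) (T m t) x ε = V m t x ε := by
    intro x ε
    unfold singlePotential
    have h1 : (fun z => (z - (fun x ε => ε * x) (T m t z) ε) * deriv (T m t) z)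
        = fun z => (z - ε * T m t z) * TD m t z := by
      funext z
      simp only
      rw [T_deriv m t ht]
    rw [h1, V_eq_integral m t ht]
  -- energy gap at εb
  have hgap : 0 ≤ energyGap (fun x ε => ε * x) (T m t) εb := by
    unfold energyGap
    rw [huFix]
    apply le_csInf
    · exact ⟨singlePotential (fun x ε => ε * x) (T m t) u εb, ⟨u, ⟨le_refl u, hu1⟩, rfl⟩⟩
    · rintro b ⟨x, hxmem, rfl⟩
      simp only [hSP]
      exact hV_nonneg x hxmem
  -- membership
  set S : Set ℝ := {ε : ℝ | ε ∈ Icc (0:ℝ) 1 ∧ 0 < uFix (fun x ε => ε * x) (T m t) ε ∧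
      0 ≤ energyGap (fun x ε => ε * x) (T m t) ε} with hS
  have hmem : εb ∈ S := by
    refine ⟨⟨le_of_lt hεb0, hεb1⟩, ?_, hgap⟩
    rw [huFix]
    exact hu0
  have hub : ∀ ε ∈ S, ε ≤ εb := by
    rintro ε ⟨⟨hε0, hε1⟩, hupos, hgapε⟩
    by_contra h
    push_neg at h
    have hule := huFix_le ε (le_of_lt h)
    have himg : (fun x => singlePotential (fun x ε => ε * x) (T m t) x ε) = fun x => V m t x ε :=
      funext fun x => hSP x ε
    have hbdd : BddBelow ((fun x => singlePotential (fun x ε => ε * x) (T m t) x ε) ''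
        Icc (uFix (fun x ε => ε * x) (T m t) ε) 1) := by
      rw [himg]
      exact (isCompact_Icc.image (V_continuous m t ε)).bddBelow
    have hle : energyGap (fun x ε => ε * x) (T m t) ε ≤ V m t xbar ε := by
      unfold energyGap
      have hxmem : xbar ∈ Icc (uFix (fun x ε => ε * x) (T m t) ε) 1 :=
        ⟨le_trans hule (le_trans huxs (le_of_lt hxsxbar)), hxbar1⟩
      have := csInf_le hbdd ⟨xbar, hxmem, rfl⟩
      rw [himg]
      simp only [hSP] at this
      exact this
    have hVneg : V m t xbar ε < 0 := by
      have h1 : V m t xbar ε = (εb - ε) * (T m t xbar)^2 / 2 := by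
        unfold V at hVxbar ⊢
        linarith
      rw [h1]
      apply div_neg_of_neg_of_pos _ two_pos
      exact mul_neg_of_neg_of_pos (by linarith) (pow_pos hTxbar 2)
    linarith
  -- conclude
  unfold potentialThreshold
  rw [← hS]
  apply le_antisymm
  · exact csSup_le ⟨εb, hmem⟩ hub
  · exact le_csSup ⟨εb, fun ε hε => hub ε hε⟩ hmem


end GLX

/-- For `2 ≤ t ≤ ⌊(n−1)/2⌋`, if `x̄` is the unique root in `(0,1]` of
`P(x) = −x g(x) + 2∫₀ˣ g(z) dz` and `ε̄ = x̄/g(x̄)`, then the potential threshold of the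
GLDPC system `f(x;ε) = εx`, `g` satisfies `ε* = ε̄`. -/




theorem gldpc_potential_threshold (n t : ℕ) (ht1 : 2 ≤ t) (ht2 : t ≤ (n - 1) / 2)
    (xbar : ℝ) (hxbar : xbar ∈ Ioc (0:ℝ) 1) (hroot : gldpcP n t xbar = 0)
    (huniq : ∀ y ∈ Ioc (0:ℝ) 1, gldpcP n t y = 0 → y = xbar) :
    potentialThreshold (fun x ε => ε * x) (gldpcG n t) = xbar / gldpcG n t xbar := by
  have hGG : gldpcG n t = GLX.T (n - 1) t := rfl
  have htm : 2 * t ≤ n - 1 := by omega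
  have ht : 1 ≤ t := by omega
  have hroot' : xbar * GLX.T (n-1) t xbar / 2 - GLX.A (n-1) t xbar = 0 := by
    unfold gldpcP at hroot
    rw [hGG, GLX.integral_T (n-1) t ht xbar] at hroot
    linarith
  rw [hGG]
  exact GLX.main_aux (n-1) t ht1 htm xbar hxbar hroot'
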